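/- Let A be a unital C*-algebra, H a complex Hilbert space, and α : A → B(H) a unital positive linear map. Then for every a ∈ A one has the operator inequality α(a)α(a*) + α(a*)α(a) ≤ α(a*a + aa*) in B(H) (i.e. the difference α(a*a + aa*) − α(a)α(a*) − α(a*)α(a) is a positive operator). -/

import Mathlib

set_option synthInstance.maxHeartbeats 1000000
set_option maxHeartbeats 4000000

open ContinuousLinearMap RCLike Finset
open scoped InnerProductSpace

/-- Collapse a hat-function sum to the two relevant terms. -/
lemma hat_collapse' (c : ℤ → ℝ) {v : ℝ} {s : Finset ℤ} (hk : ⌊v⌋ ∈ s) (hk1 : ⌊v⌋ + 1 ∈ s) :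
    ∑ i ∈ s, c i * max (1 - |v - i|) 0
      = c ⌊v⌋ * (1 - (v - ⌊v⌋)) + c (⌊v⌋ + 1) * (v - ⌊v⌋) := by
  have hθ0 : (0:ℝ) ≤ v - ⌊v⌋ := sub_nonneg.2 (Int.floor_le v)
  have hθ1 : v - ⌊v⌋ < 1 := by
    have := Int.lt_floor_add_one v; linarith
  have hpair : ({⌊v⌋, ⌊v⌋ + 1} : Finset ℤ) ⊆ s := by
    intro i hi
    simp only [Finset.mem_insert, Finset.mem_singleton] at hi
    rcases hi with rfl | rfl <;> assumption
  rw [← Finset.sum_subset hpair]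
  · have hne : (⌊v⌋ : ℤ) ∉ ({⌊v⌋ + 1} : Finset ℤ) := by simp
    rw [Finset.sum_insert hne, Finset.sum_singleton]
    have h1 : max (1 - |v - (⌊v⌋:ℝ)|) 0 = 1 - (v - ⌊v⌋) := by
      rw [abs_of_nonneg hθ0]; exact max_eq_left (by linarith)
    have h2 : max (1 - |v - ((⌊v⌋:ℤ) + 1 : ℤ)|) 0 = v - ⌊v⌋ := by
      push_cast
      rw [abs_of_nonpos (by linarith)]
      rw [show (1 : ℝ) - -(v - (⌊v⌋ + 1)) = v - ⌊v⌋ by ring]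
      exact max_eq_left hθ0
    rw [h1, h2]
  · intro i his hi
    simp only [Finset.mem_insert, Finset.mem_singleton] at hi
    push_neg at hi
    obtain ⟨h1, h2⟩ := hi
    have : max (1 - |v - (i:ℝ)|) 0 = 0 := by
      apply max_eq_right
      have : (1:ℝ) ≤ |v - i| := by
        rcases lt_or_ge (i : ℝ) (⌊v⌋ : ℝ) with h | h
        · have : (i : ℤ) ≤ ⌊v⌋ - 1 := by
            have : (i:ℤ) < ⌊v⌋ := by exact_mod_cast h
            omega
          have : (i : ℝ) ≤ (⌊v⌋ : ℝ) - 1 := by exact_mod_cast this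
          rw [abs_of_nonneg (by linarith)]; linarith
        · have hgt : (⌊v⌋:ℤ) < i := by
            rcases lt_or_eq_of_le h with h' | h'
            · exact_mod_cast h'
            · exact absurd h'.symm (by exact_mod_cast h1)
          have : (⌊v⌋:ℤ) + 2 ≤ i := by omega
          have : ((⌊v⌋:ℝ)) + 2 ≤ i := by exact_mod_cast this
          rw [abs_of_nonpos (by linarith)]; linarith
      linarith
    rw [this, mul_zero]


section OpLemmas

variable {H : Type*} [NormedAddCommGroup H] [InnerProductSpace ℂ H] [CompleteSpace H]

private lemma smul_isSelfAdjoint' {T : H →L[ℂ] H} (r : ℝ) (h : IsSelfAdjoint T) :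
    IsSelfAdjoint (r • T) := by
  rw [IsSelfAdjoint, star_smul, star_trivial, h.star_eq]

private lemma sum_isSelfAdjoint' {ι : Type*} {s : Finset ι} {T : ι → (H →L[ℂ] H)}
    (h : ∀ i ∈ s, IsSelfAdjoint (T i)) : IsSelfAdjoint (∑ i ∈ s, T i) := by
  rw [IsSelfAdjoint, star_sum]
  exact Finset.sum_congr rfl fun i hi => (h i hi).star_eq

private lemma jensen_op' {ι : Type*} (s : Finset ι) (t : ι → ℝ) (P : ι → (H →L[ℂ] H))
    (hP : ∀ i ∈ s, 0 ≤ P i) (hsum : ∑ i ∈ s, P i = 1) :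
    (∑ i ∈ s, t i • P i) * (∑ i ∈ s, t i • P i) ≤ ∑ i ∈ s, (t i ^ 2) • P i := by
  classical
  set S : H →L[ℂ] H := ∑ i ∈ s, t i • P i with hS
  have hPpos : ∀ i ∈ s, (P i).IsPositive := fun i hi =>
    (ContinuousLinearMap.nonneg_iff_isPositive _).1 (hP i hi)
  have hPsa : ∀ i ∈ s, IsSelfAdjoint (P i) := fun i hi => (hP i hi).isSelfAdjoint
  have hSsa : IsSelfAdjoint S := sum_isSelfAdjoint' fun i hi => smul_isSelfAdjoint' _ (hPsa i hi)
  set Q : ι → (H →L[ℂ] H) := fun i => CFC.sqrt (P i) with hQdef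
  have hQ2 : ∀ i ∈ s, Q i * Q i = P i := fun i hi => by
    have := CFC.sq_sqrt (P i) (hP i hi); rwa [sq] at this
  have hQsa : ∀ i, IsSelfAdjoint (Q i) := fun i =>
    (CFC.sqrt_nonneg (a := P i)).isSelfAdjoint
  have hQinner : ∀ i ∈ s, ∀ x y : H, ⟪(P i) x, y⟫_ℂ = ⟪(Q i) x, (Q i) y⟫_ℂ := by
    intro i hi x y
    rw [← hQ2 i hi]
    show ⟪(Q i) ((Q i) x), y⟫_ℂ = _
    rw [← ContinuousLinearMap.adjoint_inner_left, (hQsa i).adjoint_eq]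
  have hQinner' : ∀ i ∈ s, ∀ x y : H, ⟪x, (P i) y⟫_ℂ = ⟪(Q i) x, (Q i) y⟫_ℂ := by
    intro i hi x y
    rw [← hQ2 i hi]
    show ⟪x, (Q i) ((Q i) y)⟫_ℂ = _
    rw [← ContinuousLinearMap.adjoint_inner_right, (hQsa i).adjoint_eq]
  have hsum_inner : ∀ y : H, ∑ i ∈ s, re ⟪(P i) y, y⟫_ℂ = re ⟪y, y⟫_ℂ := by
    intro y
    rw [← map_sum, ← sum_inner, ← ContinuousLinearMap.sum_apply, hsum,
      ContinuousLinearMap.one_apply]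
  have key : ∀ x : H, re ⟪S x, S x⟫_ℂ ≤ ∑ i ∈ s, t i ^ 2 * re ⟪(P i) x, x⟫_ℂ := by
    intro x
    have hM0 : 0 ≤ ∑ i ∈ s, t i ^ 2 * re ⟪(P i) x, x⟫_ℂ :=
      Finset.sum_nonneg fun i hi => mul_nonneg (sq_nonneg _) ((hPpos i hi).re_inner_nonneg_left x)
    have hSx : S x = ∑ i ∈ s, t i • (P i) x := by
      rw [hS]; simp [ContinuousLinearMap.sum_apply]
    have expand : re ⟪S x, S x⟫_ℂ = ∑ i ∈ s, t i * re ⟪(Q i) (S x), (Q i) x⟫_ℂ := by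
      nth_rewrite 2 [hSx]
      rw [inner_sum, map_sum]
      refine Finset.sum_congr rfl fun i hi => ?_
      rw [← Complex.coe_smul, inner_smul_right, hQinner' i hi]
      simp
    have step1 : re ⟪S x, S x⟫_ℂ ≤ ∑ i ∈ s, ‖(Q i) (S x)‖ * (|t i| * ‖(Q i) x‖) := by
      rw [expand]
      refine Finset.sum_le_sum fun i hi => ?_
      calc t i * re ⟪(Q i) (S x), (Q i) x⟫_ℂ
          ≤ |t i * re ⟪(Q i) (S x), (Q i) x⟫_ℂ| := le_abs_self _
        _ = |t i| * |re ⟪(Q i) (S x), (Q i) x⟫_ℂ| := abs_mul _ _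
        _ ≤ |t i| * (‖(Q i) (S x)‖ * ‖(Q i) x‖) := by
            refine mul_le_mul_of_nonneg_left ?_ (abs_nonneg _)
            calc |re ⟪(Q i) (S x), (Q i) x⟫_ℂ| ≤ ‖⟪(Q i) (S x), (Q i) x⟫_ℂ‖ := abs_re_le_norm _
              _ ≤ ‖(Q i) (S x)‖ * ‖(Q i) x‖ := norm_inner_le_norm _ _
        _ = ‖(Q i) (S x)‖ * (|t i| * ‖(Q i) x‖) := by ring
    have cs : (∑ i ∈ s, ‖(Q i) (S x)‖ * (|t i| * ‖(Q i) x‖)) ^ 2 ≤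
        (∑ i ∈ s, ‖(Q i) (S x)‖ ^ 2) * (∑ i ∈ s, (|t i| * ‖(Q i) x‖) ^ 2) :=
      Finset.sum_mul_sq_le_sq_mul_sq s _ _
    have e1 : ∑ i ∈ s, ‖(Q i) (S x)‖ ^ 2 = re ⟪S x, S x⟫_ℂ := by
      have h' : ∀ i ∈ s, ‖(Q i) (S x)‖ ^ 2 = re ⟪(P i) (S x), S x⟫_ℂ := by
        intro i hi
        rw [hQinner i hi, ← inner_self_eq_norm_sq (𝕜 := ℂ)]
      rw [Finset.sum_congr rfl h']
      exact hsum_inner (S x)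
    have e2 : ∑ i ∈ s, (|t i| * ‖(Q i) x‖) ^ 2 = ∑ i ∈ s, t i ^ 2 * re ⟪(P i) x, x⟫_ℂ := by
      refine Finset.sum_congr rfl fun i hi => ?_
      rw [mul_pow, sq_abs, hQinner i hi, ← inner_self_eq_norm_sq (𝕜 := ℂ)]
    set u := re ⟪S x, S x⟫_ℂ with hu
    set M := ∑ i ∈ s, t i ^ 2 * re ⟪(P i) x, x⟫_ℂ with hM
    set T := ∑ i ∈ s, ‖(Q i) (S x)‖ * (|t i| * ‖(Q i) x‖) with hT
    rw [e1, e2] at cs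
    have hu0 : 0 ≤ u := inner_self_nonneg
    have hT0 : 0 ≤ T := le_trans hu0 step1
    nlinarith [mul_le_mul step1 step1 hu0 hT0]
  -- assemble positivity
  rw [ContinuousLinearMap.le_def]
  refine ⟨?_, fun x => ?_⟩
  · rw [← ContinuousLinearMap.isSelfAdjoint_iff_isSymmetric]
    apply IsSelfAdjoint.sub
    · exact sum_isSelfAdjoint' fun i hi => smul_isSelfAdjoint' _ (hPsa i hi)
    · rw [IsSelfAdjoint, star_mul, hSsa.star_eq]
  · rw [ContinuousLinearMap.reApplyInnerSelf]
    rw [ContinuousLinearMap.sub_apply, inner_sub_left, map_sub, sub_nonneg]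
    have hmul : re ⟪(S * S) x, x⟫_ℂ = re ⟪S x, S x⟫_ℂ := by
      show re ⟪S (S x), x⟫_ℂ = _
      rw [← ContinuousLinearMap.adjoint_inner_left, hSsa.adjoint_eq]
    have hrhs : re ⟪(∑ i ∈ s, (t i ^ 2) • P i) x, x⟫_ℂ = ∑ i ∈ s, t i ^ 2 * re ⟪(P i) x, x⟫_ℂ := by
      rw [ContinuousLinearMap.sum_apply, sum_inner, map_sum]
      refine Finset.sum_congr rfl fun i hi => ?_
      rw [ContinuousLinearMap.smul_apply, ← Complex.coe_smul, inner_smul_left]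
      simp [← Complex.ofReal_pow]
    rw [hmul, hrhs]
    exact key x


private lemma le_of_forall_pos_smul_one' {T U : H →L[ℂ] H}
    (h : ∀ δ : ℝ, 0 < δ → T ≤ U + δ • 1) : T ≤ U := by
  rw [ContinuousLinearMap.le_def]
  have h1 := (ContinuousLinearMap.le_def T (U + (1:ℝ) • 1)).1 (h 1 one_pos)
  constructor
  · have hsa1 : IsSelfAdjoint ((1:ℝ) • (1 : H →L[ℂ] H)) := by
      rw [IsSelfAdjoint, star_smul, star_trivial, star_one]
    have : U - T = (U + (1:ℝ) • 1 - T) - (1:ℝ) • 1 := by abel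
    rw [this]
    exact (h1.isSelfAdjoint.sub hsa1).isSymmetric
  · intro x
    rw [ContinuousLinearMap.reApplyInnerSelf]
    by_contra hc
    push_neg at hc
    set c := re ⟪(U - T) x, x⟫_ℂ with hcdef
    set δ := -c / (‖x‖ ^ 2 + 1) with hδ
    have hδpos : 0 < δ := by
      apply div_pos (by linarith) (by positivity)
    have h2 := ((ContinuousLinearMap.le_def T (U + δ • 1)).1 (h δ hδpos)).re_inner_nonneg_left x
    have hexp : re ⟪(U + δ • 1 - T) x, x⟫_ℂ = c + δ * ‖x‖ ^ 2 := by
      have : (U + δ • 1 - T) x = (U - T) x + δ • x := by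
        simp [ContinuousLinearMap.sub_apply, ContinuousLinearMap.add_apply]
        abel
      rw [this, inner_add_left, map_add, ← Complex.coe_smul, inner_smul_left]
      simp [hcdef, inner_self_eq_norm_sq (𝕜 := ℂ), inner_sub_left, ← Complex.ofReal_pow, Complex.ofReal_re]
    rw [hexp] at h2
    have hx2 : (0:ℝ) ≤ ‖x‖ ^ 2 := sq_nonneg _
    rw [hδ] at h2
    have hq1 : (0:ℝ) < ‖x‖ ^ 2 + 1 := by positivity
    have h3 : 0 ≤ (c + -c / (‖x‖ ^ 2 + 1) * ‖x‖ ^ 2) * (‖x‖ ^ 2 + 1) :=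
      mul_nonneg h2 hq1.le
    field_simp at h3
    nlinarith


end OpLemmas

section Kadison

variable {A : Type*} [CStarAlgebra A] [PartialOrder A] [StarOrderedRing A]
    {H : Type*} [NormedAddCommGroup H] [InnerProductSpace ℂ H] [CompleteSpace H]

private lemma kadison [Nontrivial A] (α : A →ₗ[ℂ] (H →L[ℂ] H))
    (h_unital : α 1 = 1) (h_pos : ∀ a : A, 0 ≤ a → 0 ≤ α a)
    {x : A} (hx : IsSelfAdjoint x) : α x * α x ≤ α (x * x) := by
  have h_mono : ∀ {a b : A}, a ≤ b → α a ≤ α b := by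
    intro a b hab
    have := h_pos (b - a) (sub_nonneg.2 hab)
    rw [map_sub] at this
    exact sub_nonneg.1 this
  apply le_of_forall_pos_smul_one'
  intro δ hδ
  obtain ⟨ε, hε, hε2⟩ : ∃ ε : ℝ, 0 < ε ∧ ε ^ 2 / 4 = δ :=
    ⟨2 * Real.sqrt δ, by positivity, by rw [mul_pow, Real.sq_sqrt hδ.le]; ring⟩
  have hεne : ε ≠ 0 := ne_of_gt hε
  set N : ℕ := ⌈‖x‖ / ε⌉₊ with hN
  set s : Finset ℤ := Finset.Icc (-(N:ℤ) - 1) ((N:ℤ) + 1) with hs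
  set g : ℤ → ℝ → ℝ := fun i u => max (1 - |u / ε - i|) 0 with hg
  have hgcont : ∀ i : ℤ, Continuous (g i) := by
    intro i
    apply Continuous.max _ continuous_const
    exact continuous_const.sub (((continuous_id.div_const ε).sub continuous_const).abs)
  have hgcont' : ∀ i : ℤ, ContinuousOn (g i) (spectrum ℝ x) := fun i => (hgcont i).continuousOn
  set t : ℤ → ℝ := fun i => (i : ℝ) * ε with ht
  -- membership of the two relevant indices
  have hmem : ∀ u ∈ spectrum ℝ x, ⌊u / ε⌋ ∈ s ∧ ⌊u / ε⌋ + 1 ∈ s := by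
    intro u hu
    have hu' : |u| ≤ ‖x‖ := by simpa using spectrum.norm_le_norm_of_mem hu
    have hv : |u / ε| ≤ (N : ℝ) := by
      rw [abs_div, abs_of_pos hε]
      exact le_trans (by gcongr) (Nat.le_ceil _)
    obtain ⟨h1, h2⟩ := abs_le.1 hv
    have hf1 : ((-(N:ℤ) : ℤ) : ℝ) ≤ u / ε := by push_cast; linarith
    have hfl : -(N:ℤ) ≤ ⌊u / ε⌋ := Int.le_floor.2 hf1
    have hfu : ⌊u / ε⌋ ≤ (N:ℤ) := by
      have := Int.floor_mono h2
      simpa using this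
    constructor <;> (rw [hs, Finset.mem_Icc]; omega)
  -- pointwise hat sums on the spectrum
  have hats : ∀ u ∈ spectrum ℝ x,
      (∑ i ∈ s, g i u = 1) ∧ (∑ i ∈ s, t i * g i u = u) ∧
      (u^2 ≤ ∑ i ∈ s, (t i)^2 * g i u) ∧ (∑ i ∈ s, (t i)^2 * g i u ≤ u^2 + δ) := by
    intro u hu
    obtain ⟨hk, hk1⟩ := hmem u hu
    have h1 := hat_collapse' (fun _ : ℤ => (1:ℝ)) hk hk1
    have h2 := hat_collapse' (fun i : ℤ => (i:ℝ) * ε) hk hk1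
    have h3 := hat_collapse' (fun i : ℤ => ((i:ℝ) * ε)^2) hk hk1
    simp only [one_mul] at h1
    push_cast at h1 h2 h3
    have hθ0 : (0:ℝ) ≤ u / ε - ⌊u / ε⌋ := sub_nonneg.2 (Int.floor_le _)
    have hθ1 : u / ε - ⌊u / ε⌋ < 1 := by
      have := Int.lt_floor_add_one (u / ε); linarith
    have hueq : ε * (u / ε) = u := by field_simp
    have hueq2 : ε ^ 2 * (u / ε) ^ 2 = u ^ 2 := by
      field_simp
    refine ⟨?_, ?_, ?_, ?_⟩
    · show (∑ i ∈ s, max (1 - |u / ε - (i:ℝ)|) 0) = 1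
      rw [h1]; ring
    · show (∑ i ∈ s, ((i:ℝ) * ε) * max (1 - |u / ε - (i:ℝ)|) 0) = u
      rw [h2]; linear_combination hueq
    · show u^2 ≤ (∑ i ∈ s, ((i:ℝ) * ε)^2 * max (1 - |u / ε - (i:ℝ)|) 0)
      rw [h3]
      nlinarith [mul_nonneg (mul_nonneg (sq_nonneg ε) hθ0) (sub_nonneg.2 hθ1.le), hueq2]
    · show (∑ i ∈ s, ((i:ℝ) * ε)^2 * max (1 - |u / ε - (i:ℝ)|) 0) ≤ u^2 + δ
      rw [h3]
      nlinarith [mul_nonneg (sq_nonneg ε) (sq_nonneg ((u / ε - ⌊u / ε⌋) - 1/2)), hueq2, hε2]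
  -- elements of A
  set p : ℤ → A := fun i => cfc (g i) x with hp
  have hp0 : ∀ i, 0 ≤ p i := fun i => cfc_nonneg (fun u _ => le_max_right _ _)
  have hpsum : ∑ i ∈ s, p i = 1 := by
    rw [hp, ← cfc_sum g x s (fun i _ => hgcont' i)]
    have : cfc (∑ i ∈ s, g i) x = cfc (fun _ : ℝ => (1:ℝ)) x := by
      apply cfc_congr
      intro u hu
      rw [Finset.sum_apply]
      exact (hats u hu).1
    rw [this, cfc_const 1 x, map_one]
  have hxsum : ∑ i ∈ s, t i • p i = x := by
    have h1 : ∀ i ∈ s, t i • p i = cfc (fun u => t i * g i u) x := fun i hi =>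
      (cfc_const_mul (t i) (g i) x (hgcont' i)).symm
    rw [Finset.sum_congr rfl h1, ← cfc_sum (fun i u => t i * g i u) x s (fun i _ => ((continuous_const.mul (hgcont i)).continuousOn))]
    have : cfc (∑ i ∈ s, fun u => t i * g i u) x = cfc (id : ℝ → ℝ) x := by
      apply cfc_congr
      intro u hu
      rw [Finset.sum_apply]
      exact (hats u hu).2.1
    rw [this, cfc_id ℝ x]
  -- the approximation of x^2
  set W : A := ∑ i ∈ s, (t i)^2 • p i with hW
  have hWcfc : W = cfc (∑ i ∈ s, fun u => (t i)^2 * g i u) x := by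
    rw [hW]
    have h1 : ∀ i ∈ s, (t i)^2 • p i = cfc (fun u => (t i)^2 * g i u) x := fun i hi =>
      (cfc_const_mul ((t i)^2) (g i) x (hgcont' i)).symm
    rw [Finset.sum_congr rfl h1, ← cfc_sum (fun i u => (t i)^2 * g i u) x s (fun i _ => ((continuous_const.mul (hgcont i)).continuousOn))]
  have hxx : x * x = cfc (fun u : ℝ => u * u) x := by
    rw [cfc_mul (fun u : ℝ => u) (fun u : ℝ => u) x (continuous_id.continuousOn) (continuous_id.continuousOn)]
    rw [cfc_id' ℝ x]
  have hWsum_cont : ContinuousOn (∑ i ∈ s, fun u => (t i)^2 * g i u) (spectrum ℝ x) := by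
    apply ContinuousOn.congr (f := fun u => ∑ i ∈ s, (t i)^2 * g i u)
    · exact (continuous_finset_sum s fun i _ => continuous_const.mul (hgcont i)).continuousOn
    · intro u hu; rw [Finset.sum_apply]
  have hW1 : x * x ≤ W := by
    rw [hWcfc, hxx]
    apply cfc_mono _ (continuous_id.mul continuous_id).continuousOn hWsum_cont
    intro u hu
    rw [Finset.sum_apply]
    have h2 := (hats u hu).2.2.1
    show u * u ≤ _
    nlinarith [h2]
  have hW2 : W ≤ x * x + δ • (1:A) := by
    have hδ1 : x * x + δ • (1:A) = cfc (fun u : ℝ => u * u + δ) x := by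
      rw [cfc_add (a := x) (fun u : ℝ => u * u) (fun _ : ℝ => δ)
        ((continuous_id.mul continuous_id).continuousOn) (continuous_const.continuousOn)]
      rw [← hxx, cfc_const δ x, Algebra.algebraMap_eq_smul_one]
    rw [hWcfc, hδ1]
    apply cfc_mono _ hWsum_cont ((continuous_id.mul continuous_id).add continuous_const).continuousOn
    intro u hu
    rw [Finset.sum_apply]
    have h2 := (hats u hu).2.2.2
    show _ ≤ u * u + δ
    nlinarith [h2]
  -- push through α
  set P : ℤ → (H →L[ℂ] H) := fun i => α (p i) with hP
  have hP0 : ∀ i ∈ s, 0 ≤ P i := fun i _ => h_pos _ (hp0 i)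
  have hPsum : ∑ i ∈ s, P i = 1 := by
    rw [hP, ← map_sum, hpsum, h_unital]
  have hαx : α x = ∑ i ∈ s, t i • P i := by
    rw [← hxsum, map_sum]
    exact Finset.sum_congr rfl fun i _ => α.map_smul_of_tower (t i) (p i)
  have hαW : α W = ∑ i ∈ s, (t i)^2 • P i := by
    rw [hW, map_sum]
    exact Finset.sum_congr rfl fun i _ => α.map_smul_of_tower ((t i)^2) (p i)
  calc α x * α x = (∑ i ∈ s, t i • P i) * (∑ i ∈ s, t i • P i) := by rw [hαx]
    _ ≤ ∑ i ∈ s, (t i)^2 • P i := jensen_op' s t P hP0 hPsum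
    _ = α W := hαW.symm
    _ ≤ α (x * x + δ • (1:A)) := h_mono hW2
    _ = α (x * x) + δ • (1 : H →L[ℂ] H) := by
        rw [map_add, α.map_smul_of_tower δ (1:A), h_unital]



end Kadison

/-- Kadison–Schwarz-type inequality (Størmer's Lemma 7.3): if `α` is a unital positive
linear map from a unital C*-algebra `A` into `B(H)`, then for every `a ∈ A`,
`α(a)α(a*) + α(a*)α(a) ≤ α(a*a + aa*)` in the Loewner order on `B(H)`. -/
theorem stmt2
    {A : Type*} [NormedRing A] [StarRing A] [CStarRing A] [NormedAlgebra ℂ A]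
    [CompleteSpace A] [PartialOrder A] [StarOrderedRing A] [StarModule ℂ A]
    {H : Type*} [NormedAddCommGroup H] [InnerProductSpace ℂ H] [CompleteSpace H]
    (α : A →ₗ[ℂ] (H →L[ℂ] H))
    (h_unital : α 1 = 1)
    (h_pos : ∀ a : A, 0 ≤ a → 0 ≤ α a)
    (a : A) :
    α a * α (star a) + α (star a) * α a ≤ α (star a * a + a * star a) := by
  by_cases htriv : (1 : A) = 0
  · have h0 : (1 : H →L[ℂ] H) = 0 := by rw [← h_unital, htriv, map_zero]
    have : Subsingleton (H →L[ℂ] H) := subsingleton_of_zero_eq_one h0.symm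
    exact le_of_eq (Subsingleton.elim _ _)
  · haveI : Nontrivial A := nontrivial_of_ne 1 0 htriv
    letI : CStarAlgebra A := {}
    obtain ⟨x, y, hx, hy, ha_eq, hb_eq, hrhs⟩ :
        ∃ x y : A, IsSelfAdjoint x ∧ IsSelfAdjoint y ∧ a = x + Complex.I • y ∧
          star a = x - Complex.I • y ∧
          star a * a + a * star a = (x*x + y*y) + (x*x + y*y) := by
      refine ⟨(2⁻¹ : ℂ) • (a + star a), (-(Complex.I/2)) • (a - star a), ?_, ?_, ?_, ?_, ?_⟩
      · rw [IsSelfAdjoint, star_smul, star_add, star_star]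
        simp only [smul_add, smul_sub]
        match_scalars <;> (simp [Complex.ext_iff]; try norm_num)
      · rw [IsSelfAdjoint, star_smul, star_sub, star_star]
        simp only [smul_add, smul_sub]
        match_scalars <;> (simp [Complex.ext_iff]; try norm_num)
      · simp only [smul_smul, smul_add, smul_sub]
        match_scalars <;> (simp [Complex.ext_iff]; try norm_num; try ring)
      · simp only [smul_smul, smul_add, smul_sub]
        match_scalars <;> (simp [Complex.ext_iff]; try norm_num; try ring)
      · simp only [mul_add, add_mul, mul_sub, sub_mul, smul_mul_assoc, mul_smul_comm, smul_smul,
          smul_add, smul_sub]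
        match_scalars <;> (simp [Complex.ext_iff]; try norm_num; try ring)
    have kx := kadison α h_unital h_pos hx
    have ky := kadison α h_unital h_pos hy
    have hαa : α a = α x + Complex.I • α y := by
      conv_lhs => rw [ha_eq]
      rw [map_add, LinearMap.map_smul]
    have hαb : α (star a) = α x - Complex.I • α y := by
      conv_lhs => rw [hb_eq]
      rw [map_sub, LinearMap.map_smul]
    calc α a * α (star a) + α (star a) * α a
        = (α x * α x + α y * α y) + (α x * α x + α y * α y) := by
          rw [hαa, hαb]
          simp only [mul_add, add_mul, mul_sub, sub_mul, smul_mul_assoc, mul_smul_comm, smul_smul,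
            smul_add, smul_sub, Complex.I_mul_I, neg_smul, one_smul]
          abel
      _ ≤ (α (x*x) + α (y*y)) + (α (x*x) + α (y*y)) :=
          add_le_add (add_le_add kx ky) (add_le_add kx ky)
      _ = α (star a * a + a * star a) := by rw [hrhs, map_add, map_add]
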